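/- Fix γ > 0, ω ∈ ℝ and λ > 0, and for r > 0 with r ≠ γ define D(ω, r, λ) := (1/λ²)·(sinh(ωλ) + e^{−ωλ}·(1 − γ/r)·(1 − e^{ωλ} − (γ/r)·log((e^{ωλ}·r − γ)/(r − γ)))), with log the real logarithm. Then the limit of D(ω, r, λ) as r → ∞ equals (cosh(ωλ) − 1)/λ². -/

import Mathlib

open Filter

/-- The time part `D(ω,r)` of the noncommutative black-hole wave operator
acting on a Fourier mode `e^{iωt}` (Proposition 5.3 of the paper), with
deformation parameter `lam` (the Planck time). -/
noncomputable def Dfun (γ ω r lam : ℝ) : ℝ :=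
  (1 / lam ^ 2) *
    (Real.sinh (ω * lam) +
      Real.exp (-(ω * lam)) * (1 - γ / r) *
        (1 - Real.exp (ω * lam) -
          (γ / r) * Real.log ((Real.exp (ω * lam) * r - γ) / (r - γ))))

/- Second limit of Proposition 5.3: far from the black hole, D(ω,r,λ) tends to
the flat bicrossproduct time symbol (cosh(ωλ) − 1)/λ². -/

theorem Dfun_limit_at_infinity (γ ω lam : ℝ) (hγ : 0 < γ) (hlam : 0 < lam) :
    Tendsto (fun r => Dfun γ ω r lam) atTop
      (nhds ((Real.cosh (ω * lam) - 1) / lam ^ 2)) := by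
  set a := ω * lam with ha
  have h0 : Tendsto (fun r : ℝ => γ / r) atTop (nhds 0) := by
    simpa using tendsto_const_nhds.div_atTop (tendsto_id (α := ℝ))
  -- limit of the ratio inside the log
  have hratio : Tendsto (fun r : ℝ => (Real.exp a * r - γ) / (r - γ)) atTop
      (nhds (Real.exp a)) := by
    have h1 : Tendsto (fun r : ℝ => (Real.exp a - γ / r) / (1 - γ / r)) atTop
        (nhds (Real.exp a)) := by
      have hc : Tendsto (fun _ : ℝ => Real.exp a) atTop (nhds (Real.exp a)) :=
        tendsto_const_nhds
      have := (hc.sub h0).div (tendsto_const_nhds.sub h0)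
        (by norm_num : (1:ℝ) - 0 ≠ 0)
      simpa using (show Tendsto (fun r : ℝ => (Real.exp a - γ / r) / (1 - γ / r)) atTop
        (nhds ((Real.exp a - 0) / (1 - 0))) from this)
    refine h1.congr' ?_
    filter_upwards [eventually_gt_atTop 0] with r hr
    field_simp
  have hlog : Tendsto (fun r : ℝ => Real.log ((Real.exp a * r - γ) / (r - γ)))
      atTop (nhds a) := by
    have := (Real.continuousAt_log (Real.exp_ne_zero a)).tendsto.comp hratio
    simpa [Real.log_exp] using (show Tendsto (fun r : ℝ => Real.log ((Real.exp a * r - γ) / (r - γ))) atTop (nhds (Real.log (Real.exp a))) from this)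
  have hmain : Tendsto (fun r => Dfun γ ω r lam) atTop
      (nhds ((1 / lam ^ 2) *
        (Real.sinh a + Real.exp (-a) * (1 - 0) * (1 - Real.exp a - 0 * a)))) := by
    unfold Dfun
    exact tendsto_const_nhds.mul
      (tendsto_const_nhds.add
        ((tendsto_const_nhds.mul (tendsto_const_nhds.sub h0)).mul
          ((tendsto_const_nhds.sub (h0.mul hlog)))))
  convert hmain using 2
  rw [Real.sinh_eq, Real.cosh_eq, Real.exp_neg]
  have h := Real.exp_ne_zero (ω * lam)
  field_simp
  ring
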